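/- Let H be a hypothesis space and let φ : Y_all → {1,2} map every ID label in Y to 1 and the OOD label K+1 to 2. If |φ∘H| > 1, where φ∘H = {φ∘h : h ∈ H} (equivalently, there exist x ∈ X and h₁, h₂ ∈ H with h₁(x) ∈ Y and h₂(x) = K+1), then OOD detection is not learnable under risk in the total space 𝒟^all (the domain space consisting of all domains) for H. -/

import Mathlib

open MeasureTheory Filter Set
open scoped ENNReal NNReal

noncomputable section

namespace OODF

/-- A *domain*: a mixture `(1-π)·D_I + π·D_O` of an ID joint distribution `D_I` on
`𝒳 × {1,…,K}` and an OOD joint distribution `D_O` on `𝒳 × {K+1}`, with class prior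
`π ∈ [0,1)`.  Labels are encoded as naturals: ID labels are `{1,…,K}`, OOD label is `K+1`. -/
structure Domain (𝒳 : Type*) [MeasurableSpace 𝒳] (K : ℕ) where
  DI : Measure (𝒳 × ℕ)
  DO : Measure (𝒳 × ℕ)
  prior : ℝ
  probI : IsProbabilityMeasure DI
  probO : IsProbabilityMeasure DO
  suppI : DI {p | p.2 ∉ Set.Icc 1 K} = 0
  suppO : DO {p | p.2 ≠ K + 1} = 0
  prior_mem : prior ∈ Set.Ico (0 : ℝ) 1

variable {𝒳 : Type*} [MeasurableSpace 𝒳] {K : ℕ}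

namespace Domain

/-- the mixed joint distribution `D_XY = (1-π)·D_I + π·D_O` -/
def joint (D : Domain 𝒳 K) : Measure (𝒳 × ℕ) :=
  ENNReal.ofReal (1 - D.prior) • D.DI + ENNReal.ofReal D.prior • D.DO

/-- the marginal `D_{X_I}` of the ID joint distribution on the feature space -/
def margI (D : Domain 𝒳 K) : Measure 𝒳 := D.DI.map Prod.fst

/-- the marginal `D_{X_O}` of the OOD joint distribution on the feature space -/
def margO (D : Domain 𝒳 K) : Measure 𝒳 := D.DO.map Prod.fst

/-- the domain `D^α = (1-α)·D_I + α·D_O`, i.e. `D` with its class prior replaced by `α` -/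
def withPrior (D : Domain 𝒳 K) (α : Set.Ico (0 : ℝ) 1) : Domain 𝒳 K :=
  { D with prior := α.1, prior_mem := α.2 }

end Domain

/-- a prior-unknown domain space: closed under changing the class prior -/
def PriorUnknown (𝒟 : Set (Domain 𝒳 K)) : Prop :=
  ∀ D ∈ 𝒟, ∀ α : Set.Ico (0 : ℝ) 1, D.withPrior α ∈ 𝒟

/-- the risk `R_D(h)` w.r.t. the mixed joint distribution -/
def risk (ℓ : ℕ → ℕ → ℝ) (D : Domain 𝒳 K) (h : 𝒳 → ℕ) : ℝ :=
  ∫ p, ℓ (h p.1) p.2 ∂D.joint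

/-- the ID risk `R_D^in(h)` -/
def riskIn (ℓ : ℕ → ℕ → ℝ) (D : Domain 𝒳 K) (h : 𝒳 → ℕ) : ℝ :=
  ∫ p, ℓ (h p.1) p.2 ∂D.DI

/-- the OOD risk `R_D^out(h)` -/
def riskOut (ℓ : ℕ → ℕ → ℝ) (D : Domain 𝒳 K) (h : 𝒳 → ℕ) : ℝ :=
  ∫ p, ℓ (h p.1) (K + 1) ∂D.DO

/-- the `α`-risk `R_D^α(h) = (1-α)·R_D^in(h) + α·R_D^out(h)` -/
def riskA (ℓ : ℕ → ℕ → ℝ) (D : Domain 𝒳 K) (h : 𝒳 → ℕ) (α : ℝ) : ℝ :=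
  (1 - α) * riskIn ℓ D h + α * riskOut ℓ D h

/-- the distribution of an i.i.d. sample of size `n` from the ID joint distribution -/
def sampleMeasure (D : Domain 𝒳 K) (n : ℕ) : Measure (Fin n → 𝒳 × ℕ) :=
  letI := D.probI
  Measure.pi fun _ => D.DI

/-- An algorithm maps, for every sample size `n ≥ 1`, a labeled sample to a function on `𝒳`. -/
abbrev Algorithm (𝒳 β : Type*) := (n : ℕ) → (Fin n → 𝒳 × ℕ) → (𝒳 → β)

/-- `A` is consistent w.r.t. `𝒟` under risk with rate `ε`: it outputs hypotheses in `H`,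
the resulting risks are measurable in the sample, and the expected excess risk for samples
of size `n ≥ 1` is at most `ε n`. -/
def ConsistentRisk (ℓ : ℕ → ℕ → ℝ) (𝒟 : Set (Domain 𝒳 K)) (H : Set (𝒳 → ℕ))
    (A : Algorithm 𝒳 ℕ) (ε : ℕ → ℝ) : Prop :=
  (∀ n : ℕ, 1 ≤ n → ∀ S, A n S ∈ H) ∧
  (∀ D ∈ 𝒟, ∀ n : ℕ, 1 ≤ n → Measurable fun S : Fin n → 𝒳 × ℕ => risk ℓ D (A n S)) ∧
  ∀ D ∈ 𝒟, ∀ n : ℕ, 1 ≤ n →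
    ∫ S, (risk ℓ D (A n S) - ⨅ h : H, risk ℓ D h.1) ∂(sampleMeasure D n) ≤ ε n

/-- OOD detection is learnable under risk in `𝒟` for `H` with the given rate. -/
def LearnableRiskRate (ℓ : ℕ → ℕ → ℝ) (𝒟 : Set (Domain 𝒳 K)) (H : Set (𝒳 → ℕ))
    (ε : ℕ → ℝ) : Prop :=
  ∃ A, ConsistentRisk ℓ 𝒟 H A ε

/-- learnability of OOD detection under risk -/
def LearnableRisk (ℓ : ℕ → ℕ → ℝ) (𝒟 : Set (Domain 𝒳 K)) (H : Set (𝒳 → ℕ)) : Prop :=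
  ∃ ε : ℕ → ℝ, Antitone ε ∧ Tendsto ε atTop (nhds 0) ∧ LearnableRiskRate ℓ 𝒟 H ε

/-- `A` is strongly consistent: the expected excess `α`-risks are uniformly small over
all `α ∈ [0,1]`. -/
def StrongConsistentRisk (ℓ : ℕ → ℕ → ℝ) (𝒟 : Set (Domain 𝒳 K)) (H : Set (𝒳 → ℕ))
    (A : Algorithm 𝒳 ℕ) (ε : ℕ → ℝ) : Prop :=
  (∀ n : ℕ, 1 ≤ n → ∀ S, A n S ∈ H) ∧
  (∀ D ∈ 𝒟, ∀ n : ℕ, 1 ≤ n → ∀ α : ℝ,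
    Measurable fun S : Fin n → 𝒳 × ℕ => riskA ℓ D (A n S) α) ∧
  ∀ D ∈ 𝒟, ∀ n : ℕ, 1 ≤ n → ∀ α ∈ Set.Icc (0 : ℝ) 1,
    ∫ S, (riskA ℓ D (A n S) α - ⨅ h : H, riskA ℓ D h.1 α) ∂(sampleMeasure D n) ≤ ε n

/-- strong learnability of OOD detection under risk -/
def StrongLearnableRisk (ℓ : ℕ → ℕ → ℝ) (𝒟 : Set (Domain 𝒳 K)) (H : Set (𝒳 → ℕ)) : Prop :=
  ∃ ε : ℕ → ℝ, Antitone ε ∧ Tendsto ε atTop (nhds 0) ∧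
    ∃ A, StrongConsistentRisk ℓ 𝒟 H A ε

/-- the AUC of a ranking function `r` w.r.t. ID marginal `P` and OOD marginal `Q`:
`AUC(r) = E_{x ~ P} E_{x' ~ Q} [1_{r(x) > r(x')} + (1/2)·1_{r(x) = r(x')}]` -/
def AUC (r : 𝒳 → ℝ) (P Q : Measure 𝒳) : ℝ :=
  ∫ x, (∫ x', ((if r x' < r x then (1 : ℝ) else 0) +
      (1 / 2) * (if r x = r x' then (1 : ℝ) else 0)) ∂Q) ∂P

/-- `A` is AUC-consistent w.r.t. `𝒟` with rate `ε`. -/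
def ConsistentAUC (𝒟 : Set (Domain 𝒳 K)) (R : Set (𝒳 → ℝ))
    (A : Algorithm 𝒳 ℝ) (ε : ℕ → ℝ) : Prop :=
  (∀ n : ℕ, 1 ≤ n → ∀ S, A n S ∈ R) ∧
  (∀ D ∈ 𝒟, ∀ n : ℕ, 1 ≤ n →
    Measurable fun S : Fin n → 𝒳 × ℕ => AUC (A n S) D.margI D.margO) ∧
  ∀ D ∈ 𝒟, ∀ n : ℕ, 1 ≤ n →
    ∫ S, ((⨆ r : R, AUC r.1 D.margI D.margO) - AUC (A n S) D.margI D.margO)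
      ∂(sampleMeasure D n) ≤ ε n

/-- OOD detection is learnable under AUC in `𝒟` for `R` with the given rate. -/
def LearnableAUCRate (𝒟 : Set (Domain 𝒳 K)) (R : Set (𝒳 → ℝ)) (ε : ℕ → ℝ) : Prop :=
  ∃ A, ConsistentAUC 𝒟 R A ε

/-- learnability of OOD detection under AUC -/
def LearnableAUC (𝒟 : Set (Domain 𝒳 K)) (R : Set (𝒳 → ℝ)) : Prop :=
  ∃ ε : ℕ → ℝ, Antitone ε ∧ Tendsto ε atTop (nhds 0) ∧ LearnableAUCRate 𝒟 R ε

/-- the (topological) support of a measure -/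
def mSupport {α : Type*} [TopologicalSpace α] [MeasurableSpace α] (μ : Measure α) : Set α :=
  {x | ∀ U ∈ nhds x, 0 < μ U}

/-- the separate space `𝒟^s`: all domains whose ID and OOD marginals have disjoint supports -/
def separateSpace (𝒳 : Type*) [MeasurableSpace 𝒳] [TopologicalSpace 𝒳] (K : ℕ) :
    Set (Domain 𝒳 K) :=
  {D | mSupport D.margO ∩ mSupport D.margI = ∅}

/-- a class `G` of binary functions (encoded as predicates) shatters the finite set `C` -/
def Shatters {α : Type*} (G : Set (α → Prop)) (C : Finset α) : Prop :=
  ∀ f : α → Prop, ∃ g ∈ G, ∀ x ∈ C, g x ↔ f x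

/-- the VC dimension of a class of binary functions (encoded as predicates) -/
def VCdim {α : Type*} (G : Set (α → Prop)) : ℕ∞ :=
  sSup {n : ℕ∞ | ∃ C : Finset α, Shatters G C ∧ n = (C.card : ℕ∞)}


section Stmt5Aux

variable {𝒳 : Type*} [MeasurableSpace 𝒳] [MeasurableSingletonClass 𝒳] {K : ℕ}

lemma stmt5_integrable_dirac (f : 𝒳 × ℕ → ℝ) (a : 𝒳 × ℕ) :
    Integrable f (Measure.dirac a) := by
  have h : f =ᵐ[Measure.dirac a] fun _ => f a := by
    rw [MeasureTheory.ae_dirac_eq]; exact Filter.eventually_pure.2 rfl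
  exact (integrable_const (f a)).congr h.symm

/-- auxiliary domain concentrated at a single point `x`, with ID label `k₁` -/
def stmt5Domain (x : 𝒳) (k₁ : ℕ) (hk : k₁ ∈ Set.Icc 1 K) (p : ℝ)
    (hp : p ∈ Set.Ico (0 : ℝ) 1) : Domain 𝒳 K where
  DI := Measure.dirac (x, k₁)
  DO := Measure.dirac (x, K + 1)
  prior := p
  probI := inferInstance
  probO := inferInstance
  suppI := by
    rw [Measure.dirac_apply, Set.indicator_of_notMem]
    exact fun hcon => hcon hk
  suppO := by
    rw [Measure.dirac_apply, Set.indicator_of_notMem]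
    exact fun hcon => hcon rfl
  prior_mem := hp

lemma stmt5_risk (ℓ : ℕ → ℕ → ℝ) (x : 𝒳) (k₁ : ℕ) (hk : k₁ ∈ Set.Icc 1 K) (p : ℝ)
    (hp : p ∈ Set.Ico (0 : ℝ) 1) (h : 𝒳 → ℕ) :
    risk ℓ (stmt5Domain x k₁ hk p hp) h
      = (1 - p) * ℓ (h x) k₁ + p * ℓ (h x) (K + 1) := by
  have h1 : (0 : ℝ) ≤ 1 - p := by linarith [hp.2]
  have hf : ∀ a : 𝒳 × ℕ, Integrable (fun q : 𝒳 × ℕ => ℓ (h q.1) q.2) (Measure.dirac a) :=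
    fun a => stmt5_integrable_dirac _ a
  show ∫ q : 𝒳 × ℕ, ℓ (h q.1) q.2
      ∂(ENNReal.ofReal (1 - p) • Measure.dirac (x, k₁)
        + ENNReal.ofReal p • Measure.dirac (x, K + 1)) = _
  rw [integral_add_measure ((hf _).smul_measure ENNReal.ofReal_ne_top)
      ((hf _).smul_measure ENNReal.ofReal_ne_top),
    integral_smul_measure, integral_smul_measure, integral_dirac, integral_dirac,
    ENNReal.toReal_ofReal h1, ENNReal.toReal_ofReal hp.1]
  simp [smul_eq_mul]

lemma stmt5_integral_affine_le {Ω : Type*} [MeasurableSpace Ω] (μ : Measure Ω)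
    [IsProbabilityMeasure μ] (f g : Ω → ℝ) (hf : Integrable f μ) (hg : Integrable g μ)
    (a b : ℝ) (hpt : ∀ s, a * f s + b ≤ g s) :
    a * (∫ s, f s ∂μ) + b ≤ ∫ s, g s ∂μ := by
  have h := integral_mono ((hf.const_mul a).add (integrable_const b)) hg hpt
  simp only [Pi.add_apply] at h
  rwa [integral_add (hf.const_mul a) (integrable_const b), integral_const_mul,
    integral_const, probReal_univ, one_smul] at h

lemma stmt5_integral_sub_const {Ω : Type*} [MeasurableSpace Ω] (μ : Measure Ω)
    [IsProbabilityMeasure μ] (f : Ω → ℝ) (hf : Integrable f μ) (b : ℝ) :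
    ∫ s, (f s - b) ∂μ = (∫ s, f s ∂μ) - b := by
  rw [integral_sub hf (integrable_const b), integral_const, probReal_univ,
    one_smul]

lemma stmt5_main {𝒳 : Type*} [MeasurableSpace 𝒳] [MeasurableSingletonClass 𝒳] {K : ℕ}
    (ℓ : ℕ → ℕ → ℝ)
    (hl_nonneg : ∀ y₁ y₂, 0 ≤ ℓ y₁ y₂)
    (hl_zero : ∀ y₁ ∈ Set.Icc 1 (K + 1), ∀ y₂ ∈ Set.Icc 1 (K + 1), (ℓ y₁ y₂ = 0 ↔ y₁ = y₂))
    (hl_bdd : ∃ B, ∀ y₁ ∈ Set.Icc 1 (K + 1), ∀ y₂ ∈ Set.Icc 1 (K + 1), ℓ y₁ y₂ ≤ B)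
    (H : Set (𝒳 → ℕ)) (hH : ∀ h ∈ H, Measurable h ∧ ∀ x, h x ∈ Set.Icc 1 (K + 1))
    (hnontriv : ∃ x : 𝒳, ∃ h₁ ∈ H, ∃ h₂ ∈ H, h₁ x ∈ Set.Icc 1 K ∧ h₂ x = K + 1) :
    ¬ LearnableRisk ℓ (Set.univ : Set (Domain 𝒳 K)) H := by

  obtain ⟨x, h₁, hh₁, h₂, hh₂, hk₁mem, hk₂⟩ := hnontriv
  obtain ⟨B, hB⟩ := hl_bdd
  set k₁ := h₁ x with hk₁def
  have hk₁ : k₁ ∈ Set.Icc 1 K := hk₁mem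
  have hk₁' : k₁ ∈ Set.Icc 1 (K + 1) := ⟨hk₁.1, hk₁.2.trans (Nat.le_succ K)⟩
  have hK1 : K + 1 ∈ Set.Icc 1 (K + 1) := ⟨by omega, le_rfl⟩
  have hk₁ne : k₁ ≠ K + 1 := by have := hk₁.2; omega
  -- the constant c : minimal value of ℓ a k₁ + ℓ a (K+1) over admissible labels a
  classical
  set T : Finset ℝ := (Finset.Icc 1 (K + 1)).image (fun a => ℓ a k₁ + ℓ a (K + 1)) with hT
  have hTne : T.Nonempty :=
    ⟨ℓ 1 k₁ + ℓ 1 (K + 1), Finset.mem_image.2 ⟨1, Finset.mem_Icc.2 ⟨le_rfl, by omega⟩, rfl⟩⟩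
  set c := T.min' hTne with hc
  have hcpos : 0 < c := by
    obtain ⟨a, ha, hac⟩ := Finset.mem_image.1 (T.min'_mem hTne)
    rw [hc, ← hac]
    rcases Finset.mem_Icc.1 ha with ⟨ha1, ha2⟩
    have ha' : a ∈ Set.Icc 1 (K + 1) := ⟨ha1, ha2⟩
    by_cases hcase : a = k₁
    · have hne : ℓ a (K + 1) ≠ 0 := fun h0 =>
        hk₁ne (hcase ▸ (hl_zero a ha' (K + 1) hK1).1 h0)
      have := lt_of_le_of_ne (hl_nonneg a (K + 1)) (Ne.symm hne)
      nlinarith [hl_nonneg a k₁]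
    · have hne : ℓ a k₁ ≠ 0 := fun h0 => hcase ((hl_zero a ha' k₁ hk₁').1 h0)
      have := lt_of_le_of_ne (hl_nonneg a k₁) (Ne.symm hne)
      nlinarith [hl_nonneg a (K + 1)]
  have hcle : ∀ a ∈ Set.Icc 1 (K + 1), c ≤ ℓ a k₁ + ℓ a (K + 1) := fun a ha =>
    Finset.min'_le T _ (Finset.mem_image.2 ⟨a, Finset.mem_Icc.2 ⟨ha.1, ha.2⟩, rfl⟩)
  set L := ℓ (K + 1) k₁ with hLdef
  have hL0 : 0 ≤ L := hl_nonneg _ _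
  -- the adversarial prior p
  set p : ℝ := max (1 / 2) (1 - c / (4 * (L + 1))) with hpdef
  have hp1 : p < 1 := by
    apply max_lt (by norm_num)
    have : 0 < c / (4 * (L + 1)) := div_pos hcpos (by linarith)
    linarith
  have hphalf : (1 : ℝ) / 2 ≤ p := le_max_left _ _
  have hp0 : 0 ≤ p := by linarith
  have hpmem : p ∈ Set.Ico (0 : ℝ) 1 := ⟨hp0, hp1⟩
  have h0mem : (0 : ℝ) ∈ Set.Ico (0 : ℝ) 1 := ⟨le_rfl, by norm_num⟩
  have hkey : c / 4 ≤ p * c - (1 - p) * L := by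
    have h1p : 1 - p ≤ c / (4 * (L + 1)) := by
      have := le_max_right (1 / 2 : ℝ) (1 - c / (4 * (L + 1))); linarith
    have h2 : (1 - p) * L ≤ c / (4 * (L + 1)) * L :=
      mul_le_mul_of_nonneg_right h1p hL0
    have h3 : c / (4 * (L + 1)) * L ≤ c / 4 := by
      rw [div_mul_eq_mul_div, div_le_div_iff₀ (by linarith) (by norm_num)]
      nlinarith
    nlinarith
  -- the two domains
  set D0 := stmt5Domain x k₁ hk₁ 0 h0mem with hD0
  set Dp := stmt5Domain x k₁ hk₁ p hpmem with hDp
  rintro ⟨ε, hmono, htend, A, hmemH, hmeas, hcons⟩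
  -- choose a sample size n with ε n small
  obtain ⟨m, hm⟩ := Filter.eventually_atTop.1
    (htend.eventually_lt_const (show (0 : ℝ) < c / 8 by positivity))
  set n := max m 1 with hn
  have hn1 : 1 ≤ n := le_max_right _ _
  have hεn : ε n < c / 8 := hm n (le_max_left _ _)
  -- the common sample measure
  set μ := sampleMeasure D0 n with hμ
  have hsame : sampleMeasure Dp n = μ := rfl
  haveI : IsProbabilityMeasure ((stmt5Domain x k₁ hk₁ 0 h0mem : Domain 𝒳 K).DI) := D0.probI
  haveI hprob : IsProbabilityMeasure μ := by
    rw [hμ]; unfold sampleMeasure; infer_instance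
  haveI : Nonempty ↥H := ⟨⟨h₁, hh₁⟩⟩
  -- risk formulas
  have hrisk0 : ∀ h : 𝒳 → ℕ, risk ℓ D0 h = ℓ (h x) k₁ := by
    intro h; rw [hD0, stmt5_risk]; ring
  have hriskp : ∀ h : 𝒳 → ℕ,
      risk ℓ Dp h = (1 - p) * ℓ (h x) k₁ + p * ℓ (h x) (K + 1) := by
    intro h; rw [hDp, stmt5_risk]
  -- the infima
  have hbdd0 : BddBelow (Set.range fun h : H => risk ℓ D0 h.1) := by
    refine ⟨0, ?_⟩
    rintro r ⟨h, rfl⟩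
    show (0:ℝ) ≤ risk ℓ D0 h.1
    rw [hrisk0]; exact hl_nonneg _ _
  have hbddp : BddBelow (Set.range fun h : H => risk ℓ Dp h.1) := by
    refine ⟨0, ?_⟩
    rintro r ⟨h, rfl⟩
    show (0:ℝ) ≤ risk ℓ Dp h.1
    rw [hriskp]
    have := hl_nonneg (h.1 x) k₁
    have := hl_nonneg (h.1 x) (K + 1)
    nlinarith [hp1, hp0]
  have hinf0 : (⨅ h : H, risk ℓ D0 h.1) = 0 := by
    apply le_antisymm
    · have := ciInf_le hbdd0 (⟨h₁, hh₁⟩ : H)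
      rw [hrisk0 h₁, ← hk₁def, (hl_zero k₁ hk₁' k₁ hk₁').2 rfl] at this
      exact this
    · apply le_ciInf
      intro h
      show (0:ℝ) ≤ risk ℓ D0 h.1
      rw [hrisk0]; exact hl_nonneg _ _
  have hinfp : (⨅ h : H, risk ℓ Dp h.1) ≤ (1 - p) * L := by
    have := ciInf_le hbddp (⟨h₂, hh₂⟩ : H)
    rw [hriskp h₂, hk₂, (hl_zero (K + 1) hK1 (K + 1) hK1).2 rfl] at this
    calc (⨅ h : H, risk ℓ Dp h.1) ≤ (1 - p) * ℓ (K + 1) k₁ + p * 0 := this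
      _ = (1 - p) * L := by ring
  -- properties of the algorithm's output
  have hrange : ∀ S : Fin n → 𝒳 × ℕ, A n S x ∈ Set.Icc 1 (K + 1) :=
    fun S => (hH _ (hmemH n hn1 S)).2 x
  have hBa : ∀ S, ℓ (A n S x) k₁ ≤ B := fun S => hB _ (hrange S) _ hk₁'
  have hBb : ∀ S, ℓ (A n S x) (K + 1) ≤ B := fun S => hB _ (hrange S) _ hK1
  have hBnn : 0 ≤ B := le_trans (hl_nonneg 1 1) (hB 1 ⟨le_rfl, by omega⟩ 1 ⟨le_rfl, by omega⟩)
  -- integrability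
  have hmeas0 : Measurable fun S : Fin n → 𝒳 × ℕ => risk ℓ D0 (A n S) :=
    hmeas D0 (Set.mem_univ _) n hn1
  have hmeasp : Measurable fun S : Fin n → 𝒳 × ℕ => risk ℓ Dp (A n S) :=
    hmeas Dp (Set.mem_univ _) n hn1
  have hint0 : Integrable (fun S => risk ℓ D0 (A n S)) μ := by
    refine Integrable.mono' (integrable_const B) hmeas0.aestronglyMeasurable
      (Filter.Eventually.of_forall fun S => ?_)
    rw [Real.norm_eq_abs, abs_le, hrisk0]
    exact ⟨by linarith [hl_nonneg (A n S x) k₁], hBa S⟩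
  have hintp : Integrable (fun S => risk ℓ Dp (A n S)) μ := by
    refine Integrable.mono' (integrable_const B) hmeasp.aestronglyMeasurable
      (Filter.Eventually.of_forall fun S => ?_)
    rw [Real.norm_eq_abs, abs_le, hriskp]
    have h1 := hl_nonneg (A n S x) k₁
    have h2 := hl_nonneg (A n S x) (K + 1)
    constructor
    · nlinarith [hp0, hp1]
    · nlinarith [hBa S, hBb S, hp0, hp1]
  -- expected risks
  set E0 := ∫ S, risk ℓ D0 (A n S) ∂μ with hE0
  set Ep := ∫ S, risk ℓ Dp (A n S) ∂μ with hEp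
  have hE0nn : 0 ≤ E0 := integral_nonneg fun S => by
    show (0:ℝ) ≤ risk ℓ D0 (A n S)
    rw [hrisk0]; exact hl_nonneg _ _
  -- consistency on D0 gives E0 ≤ ε n
  have hE0le : E0 ≤ ε n := by
    have h := hcons D0 (Set.mem_univ _) n hn1
    rw [hinf0] at h
    simpa using h
  -- pointwise lower bound on the Dp-risk
  have hpoint : ∀ S, (1 - 2 * p) * risk ℓ D0 (A n S) + p * c ≤ risk ℓ Dp (A n S) := by
    intro S
    rw [hrisk0, hriskp]
    have hsum := hcle (A n S x) (hrange S)
    nlinarith [hp0]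
  have hEplb : (1 - 2 * p) * E0 + p * c ≤ Ep :=
    stmt5_integral_affine_le μ _ _ hint0 hintp (1 - 2 * p) (p * c) hpoint
  -- consistency on Dp
  have hEpub : Ep - (1 - p) * L ≤ ε n := by
    have h : ∫ S, (risk ℓ Dp (A n S) - ⨅ h : H, risk ℓ Dp h.1) ∂μ ≤ ε n :=
      hsame ▸ hcons Dp (Set.mem_univ _) n hn1
    rw [stmt5_integral_sub_const μ _ hintp] at h
    have : Ep - (1 - p) * L ≤ Ep - ⨅ h : H, risk ℓ Dp h.1 := by linarith [hinfp]
    linarith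
  -- now derive the contradiction
  have hεnn : 0 ≤ ε n := le_trans hE0nn hE0le
  have prod1 : 0 ≤ (2 * p - 1) * (ε n - E0) :=
    mul_nonneg (by linarith) (by linarith)
  have prod2 : 0 ≤ (1 - p) * ε n := mul_nonneg (by linarith) hεnn
  nlinarith [hkey, hεn, hEplb, hEpub, prod1, prod2]

end Stmt5Aux

/-- Theorem 4 of the paper: impossibility for the total space under
risk.  If the binarized hypothesis space `φ∘H` is non-trivial, i.e. there are `x ∈ X` and
`h₁, h₂ ∈ H` with `h₁(x) ∈ Y` and `h₂(x) = K+1`, then OOD detection is not learnable under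
risk in the total space (the space of all domains) for `H`. -/
theorem stmt5 {d K : ℕ} (X : Set (EuclideanSpace ℝ (Fin d)))
    (ℓ : ℕ → ℕ → ℝ)
    (hl_nonneg : ∀ y₁ y₂, 0 ≤ ℓ y₁ y₂)
    (hl_zero : ∀ y₁ ∈ Set.Icc 1 (K + 1), ∀ y₂ ∈ Set.Icc 1 (K + 1), (ℓ y₁ y₂ = 0 ↔ y₁ = y₂))
    (hl_bdd : ∃ B, ∀ y₁ ∈ Set.Icc 1 (K + 1), ∀ y₂ ∈ Set.Icc 1 (K + 1), ℓ y₁ y₂ ≤ B)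
    (H : Set (↥X → ℕ)) (hH : ∀ h ∈ H, Measurable h ∧ ∀ x, h x ∈ Set.Icc 1 (K + 1))
    (hnontriv : ∃ x : ↥X, ∃ h₁ ∈ H, ∃ h₂ ∈ H, h₁ x ∈ Set.Icc 1 K ∧ h₂ x = K + 1) :
    ¬ LearnableRisk ℓ (Set.univ : Set (Domain ↥X K)) H :=
  stmt5_main ℓ hl_nonneg hl_zero hl_bdd H hH hnontriv

end OODF

end
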